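/- For every positive integer n and every complex number z, the sum over all partitions λ of n of the product, over the multiset H(λ)^⋄ of hook lengths of cells of λ whose leg length is 0, of (h+z)/h equals P_n(z+1), where P_n denotes the n-th D'Arcais polynomial. Equivalently, as polynomials in z, Σ_{λ⊢n} Π_{h∈H(λ)^⋄} (h+z)/h = P_n(z+1). -/

import Mathlib

open Finset Polynomial

/-- The `n`-th D'Arcais polynomial `P_n ∈ ℚ[x]`, defined via the recursion
`P_0 = 1`, `P_n = (x/n) · ∑_{k=1}^n σ(k) P_{n-k}` (equivalently, via the
formal power series identity `∑_{n≥0} P_n(x) q^n = ∏_{m≥1} (1 - q^m)^{-x}`). -/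
noncomputable def darcais : ℕ → Polynomial ℚ
  | 0 => 1
  | n + 1 =>
      Polynomial.C (((n : ℚ) + 1)⁻¹) * Polynomial.X *
        ∑ k ∈ Finset.range (n + 1),
          ((∑ d ∈ Nat.divisors (k + 1), d : ℕ) : ℚ) • darcais (n - k)
  termination_by n => n
  decreasing_by omega

/-- Length of column `j` (0-indexed) of the Young diagram of `μ`,
i.e. the number of parts of `μ` that are at least `j+1`. -/
def colLen {n : ℕ} (μ : Nat.Partition n) (j : ℕ) : ℕ :=
  (μ.parts.filter (fun p => j + 1 ≤ p)).card

/-- Length of row `i` (0-indexed) of the Young diagram of `μ`; this is the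
`(i+1)`-st largest part of `μ` (or `0` if there is no such part). -/
def rowLen {n : ℕ} (μ : Nat.Partition n) (i : ℕ) : ℕ :=
  ((Finset.range n).filter (fun j => i < colLen μ j)).card

/-- The cells (0-indexed, `(row, column)`) of the Young diagram of `μ`. -/
def cells {n : ℕ} (μ : Nat.Partition n) : Finset (ℕ × ℕ) :=
  (Finset.range n ×ˢ Finset.range n).filter (fun c => c.1 < colLen μ c.2)

/-- The arm length of a cell: the number of cells strictly to its right in its row. -/
def armLen {n : ℕ} (μ : Nat.Partition n) (c : ℕ × ℕ) : ℕ := rowLen μ c.1 - (c.2 + 1)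

/-- The leg length of a cell: the number of cells strictly below it in its column. -/
def legLen {n : ℕ} (μ : Nat.Partition n) (c : ℕ × ℕ) : ℕ := colLen μ c.2 - (c.1 + 1)

/-- The hook length of a cell: `arm + leg + 1`. -/
def hookLen {n : ℕ} (μ : Nat.Partition n) (c : ℕ × ℕ) : ℕ := armLen μ c + legLen μ c + 1

/-- `H(μ)`: the multiset of all hook lengths of `μ`. -/
def hooks {n : ℕ} (μ : Nat.Partition n) : Multiset ℕ := (cells μ).val.map (hookLen μ)

/-- `H(μ)^⋄`: the multiset of hook lengths of the cells of `μ` with trivial leg. -/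
def hooksDia {n : ℕ} (μ : Nat.Partition n) : Multiset ℕ :=
  (((cells μ).filter (fun c => legLen μ c = 0)).val).map (hookLen μ)

/-- `H(μ)^⋄⋄`: the multiset of hook lengths of the cells of `μ` with trivial arm. -/
def hooksDiaDia {n : ℕ} (μ : Nat.Partition n) : Multiset ℕ :=
  (((cells μ).filter (fun c => armLen μ c = 0)).val).map (hookLen μ)

/-- A downward-closed filter of `range N` is an initial segment. -/
lemma mem_filter_range_iff_lt_card {N : ℕ} {P : ℕ → Prop} [DecidablePred P]
    (hP : ∀ ⦃a b : ℕ⦄, a ≤ b → P b → P a) (j : ℕ) :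
    j ∈ (Finset.range N).filter P ↔ j < ((Finset.range N).filter P).card := by
  constructor
  · intro hj
    have hsub : Finset.range (j + 1) ⊆ (Finset.range N).filter P := by
      intro x hx
      simp only [Finset.mem_range] at hx
      simp only [Finset.mem_filter, Finset.mem_range] at hj ⊢
      exact ⟨lt_of_le_of_lt (Nat.lt_succ_iff.mp hx) hj.1, hP (Nat.lt_succ_iff.mp hx) hj.2⟩
    have := Finset.card_le_card hsub
    simpa using this
  · intro hj
    by_contra hmem
    have hsub : (Finset.range N).filter P ⊆ Finset.range j := by
      intro x hx
      simp only [Finset.mem_range]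
      by_contra hxj
      push_neg at hxj
      apply hmem
      simp only [Finset.mem_filter, Finset.mem_range] at hx ⊢
      exact ⟨lt_of_le_of_lt hxj hx.1, hP hxj hx.2⟩
    have := Finset.card_le_card hsub
    simp only [Finset.card_range] at this
    omega

lemma part_le {n : ℕ} (μ : Nat.Partition n) {p : ℕ} (hp : p ∈ μ.parts) : p ≤ n := by
  have := Multiset.single_le_sum (fun x hx => Nat.zero_le x) p hp
  rwa [μ.parts_sum] at this

lemma card_parts_le {n : ℕ} (μ : Nat.Partition n) : Multiset.card μ.parts ≤ n := by
  have h : Multiset.card μ.parts = (μ.parts.map (fun _ => 1)).sum := by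
    simp [Multiset.map_const', Multiset.sum_replicate]
  calc Multiset.card μ.parts = (μ.parts.map (fun _ => 1)).sum := h
    _ ≤ (μ.parts.map id).sum := by
        apply Multiset.sum_map_le_sum_map
        intro x hx
        exact μ.parts_pos hx
    _ = n := by simpa using μ.parts_sum

lemma colLen_le {n : ℕ} (μ : Nat.Partition n) (j : ℕ) : colLen μ j ≤ n :=
  le_trans (Multiset.card_le_card (Multiset.filter_le _ _)) (card_parts_le μ)

lemma colLen_anti {n : ℕ} (μ : Nat.Partition n) {j j' : ℕ} (h : j ≤ j') :
    colLen μ j' ≤ colLen μ j := by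
  apply Multiset.card_le_card
  exact Multiset.monotone_filter_right _ (fun b hb => by omega)

lemma colLen_eq_zero {n : ℕ} (μ : Nat.Partition n) {j : ℕ} (h : n ≤ j) : colLen μ j = 0 := by
  rw [colLen, Multiset.card_eq_zero, Multiset.filter_eq_nil]
  intro p hp
  have := part_le μ hp
  omega

/-- Key duality: `i < colLen μ j ↔ j < rowLen μ i`. -/
lemma lt_colLen_iff {n : ℕ} (μ : Nat.Partition n) {i j : ℕ} :
    i < colLen μ j ↔ j < rowLen μ i := by
  have hmono : ∀ ⦃a b : ℕ⦄, a ≤ b → i < colLen μ b → i < colLen μ a :=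
    fun a b hab hb => lt_of_lt_of_le hb (colLen_anti μ hab)
  rw [rowLen, ← mem_filter_range_iff_lt_card (P := fun j => i < colLen μ j) hmono j,
    Finset.mem_filter, Finset.mem_range]
  constructor
  · intro h
    refine ⟨?_, h⟩
    by_contra hjn
    push_neg at hjn
    rw [colLen_eq_zero μ hjn] at h
    omega
  · exact And.right

lemma rowLen_anti {n : ℕ} (μ : Nat.Partition n) {i i' : ℕ} (h : i ≤ i') :
    rowLen μ i' ≤ rowLen μ i := by
  apply Finset.card_le_card
  intro j hj
  simp only [Finset.mem_filter, Finset.mem_range] at hj ⊢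
  exact ⟨hj.1, lt_of_le_of_lt h hj.2⟩

lemma rowLen_le {n : ℕ} (μ : Nat.Partition n) (i : ℕ) : rowLen μ i ≤ n := by
  have := Finset.card_le_card
    (Finset.filter_subset (fun j => i < colLen μ j) (Finset.range n))
  simpa [rowLen] using this

lemma rowLen_eq_zero {n : ℕ} (μ : Nat.Partition n) {i : ℕ} (h : n ≤ i) : rowLen μ i = 0 := by
  rw [rowLen, Finset.card_eq_zero, Finset.filter_eq_empty_iff]
  intro j _
  have := colLen_le μ j
  omega


lemma colLen_eq_card_rowLen {n : ℕ} (μ : Nat.Partition n) (j : ℕ) :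
    colLen μ j = ((Finset.range n).filter (fun i => j < rowLen μ i)).card := by
  have h1 : ((Finset.range n).filter (fun i => j < rowLen μ i))
      = ((Finset.range n).filter (fun i => i < colLen μ j)) := by
    apply Finset.filter_congr
    intro i _
    simp [lt_colLen_iff μ]
  rw [h1]
  have h2 : ((Finset.range n).filter (fun i => i < colLen μ j)) = Finset.range (colLen μ j) := by
    ext i
    simp only [Finset.mem_filter, Finset.mem_range]
    have := colLen_le μ j
    omega
  rw [h2, Finset.card_range]

lemma sum_range_card_filter (s : Multiset ℕ) (N : ℕ) (h : ∀ p ∈ s, p ≤ N) :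
    ∑ j ∈ Finset.range N, (s.filter (fun p => j + 1 ≤ p)).card = s.sum := by
  induction s using Multiset.induction with
  | empty => simp
  | cons a s ih =>
    have ha : a ≤ N := h a (Multiset.mem_cons_self a s)
    have ihs := ih (fun p hp => h p (Multiset.mem_cons_of_mem hp))
    have key : ∀ j : ℕ, ((a ::ₘ s).filter (fun p => j + 1 ≤ p)).card
        = (if j + 1 ≤ a then 1 else 0) + (s.filter (fun p => j + 1 ≤ p)).card := by
      intro j
      rw [← Multiset.countP_eq_card_filter, ← Multiset.countP_eq_card_filter,
        Multiset.countP_cons]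
      split_ifs <;> omega
    simp only [key, Finset.sum_add_distrib, ihs, Multiset.sum_cons]
    congr 1
    rw [← Finset.card_filter]
    have : (Finset.range N).filter (fun j => j + 1 ≤ a) = Finset.range a := by
      ext j; simp only [Finset.mem_filter, Finset.mem_range]; omega
    rw [this, Finset.card_range]

lemma sum_colLen {n : ℕ} (μ : Nat.Partition n) :
    ∑ j ∈ Finset.range n, colLen μ j = n := by
  have := sum_range_card_filter μ.parts n (fun p hp => part_le μ hp)
  rw [μ.parts_sum] at this
  simpa [colLen] using this

lemma sum_rowLen {n : ℕ} (μ : Nat.Partition n) :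
    ∑ i ∈ Finset.range n, rowLen μ i = n := by
  have h : ∀ i, rowLen μ i
      = ∑ j ∈ Finset.range n, (if i < colLen μ j then 1 else 0) := by
    intro i
    rw [rowLen, Finset.card_filter]
  calc ∑ i ∈ Finset.range n, rowLen μ i
      = ∑ i ∈ Finset.range n, ∑ j ∈ Finset.range n, (if i < colLen μ j then 1 else 0) := by
        simp only [h]
    _ = ∑ j ∈ Finset.range n, ∑ i ∈ Finset.range n, (if i < colLen μ j then 1 else 0) :=
        Finset.sum_comm
    _ = ∑ j ∈ Finset.range n, colLen μ j := by
        apply Finset.sum_congr rfl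
        intro j _
        rw [← Finset.card_filter]
        have : (Finset.range n).filter (fun i => i < colLen μ j) = Finset.range (colLen μ j) := by
          ext i; simp only [Finset.mem_filter, Finset.mem_range]
          have := colLen_le μ j; omega
        simp [this]
    _ = n := sum_colLen μ

lemma count_parts {n : ℕ} (μ : Nat.Partition n) (v : ℕ) :
    μ.parts.count (v + 1) = colLen μ v - colLen μ (v + 1) := by
  have hsplit : μ.parts.filter (fun p => v + 1 ≤ p)
      = μ.parts.filter (fun p => v + 1 + 1 ≤ p) + μ.parts.filter (fun p => v + 1 = p) := by
    ext a
    rw [Multiset.count_add]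
    rw [Multiset.count_filter, Multiset.count_filter, Multiset.count_filter]
    split_ifs <;> omega
  have hcard := congrArg Multiset.card hsplit
  rw [Multiset.card_add] at hcard
  have hcount : μ.parts.count (v + 1) = (μ.parts.filter (fun p => v + 1 = p)).card :=
    Multiset.count_eq_card_filter_eq _ _
  simp only [colLen]
  omega

lemma partition_eq_of_rowLen_eq {n : ℕ} (μ ν : Nat.Partition n)
    (h : ∀ i, rowLen μ i = rowLen ν i) : μ = ν := by
  have hcol : ∀ j, colLen μ j = colLen ν j := by
    intro j
    rw [colLen_eq_card_rowLen, colLen_eq_card_rowLen]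
    congr 1
    apply Finset.filter_congr
    intro i _
    simp [h i]
  have hcount : ∀ v, μ.parts.count v = ν.parts.count v := by
    intro v
    match v with
    | 0 =>
      rw [Multiset.count_eq_zero_of_notMem, Multiset.count_eq_zero_of_notMem]
      · intro hmem; exact absurd (ν.parts_pos hmem) (lt_irrefl 0)
      · intro hmem; exact absurd (μ.parts_pos hmem) (lt_irrefl 0)
    | v + 1 => rw [count_parts, count_parts, hcol, hcol]
  have : μ.parts = ν.parts := Multiset.ext.mpr hcount
  cases μ; cases ν; simp_all

lemma sum_Ico_sub_telescope (r : ℕ → ℕ) (hr : ∀ t, r (t + 1) ≤ r t) {i N : ℕ} (hiN : i ≤ N) :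
    ∑ t ∈ Finset.Ico i N, (r t - r (t + 1)) + r N = r i := by
  induction N, hiN using Nat.le_induction with
  | base => simp
  | succ N hiN ih =>
    rw [Finset.sum_Ico_succ_top hiN]
    have := hr N
    omega

lemma weighted_telescope (r : ℕ → ℕ) (hr : ∀ t, r (t + 1) ≤ r t) (N : ℕ) :
    ∑ i ∈ Finset.range N, (i + 1) * (r i - r (i + 1)) + N * r N
      = ∑ i ∈ Finset.range N, r i := by
  induction N with
  | zero => simp
  | succ N ih =>
    rw [Finset.sum_range_succ, Finset.sum_range_succ]
    have h1 : (N + 1) * (r N - r (N + 1)) + (N + 1) * r (N + 1) = (N + 1) * r N := by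
      rw [← Nat.left_distrib, Nat.sub_add_cancel (hr N)]
    have h2 : (N + 1) * r N = N * r N + r N := by ring
    linarith [ih, h1, h2]

lemma row_filter_eq {n : ℕ} (μ : Nat.Partition n) (i : ℕ) :
    (Finset.range n).filter (fun j => colLen μ j = i + 1)
      = Finset.Ico (rowLen μ (i + 1)) (rowLen μ i) := by
  ext j
  simp only [Finset.mem_filter, Finset.mem_range, Finset.mem_Ico]
  constructor
  · intro ⟨hjn, hc⟩
    have h1 : j < rowLen μ i := (lt_colLen_iff μ).mp (by omega)
    have h2 : ¬ j < rowLen μ (i + 1) := by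
      intro hcon
      have := (lt_colLen_iff μ).mpr hcon
      omega
    omega
  · intro ⟨h1, h2⟩
    have h3 : i < colLen μ j := (lt_colLen_iff μ).mpr h2
    have h4 : ¬ (i + 1 < colLen μ j) := by
      intro hcon
      have := (lt_colLen_iff μ).mp hcon
      omega
    have h5 : j < n := by
      by_contra hjn
      push_neg at hjn
      rw [colLen_eq_zero μ hjn] at h3
      omega
    omega

lemma hooksDia_prod {n : ℕ} (μ : Nat.Partition n) (f : ℕ → ℂ) :
    ((hooksDia μ).map f).prod
      = ∏ i ∈ Finset.range n,
          ∏ t ∈ Finset.range (rowLen μ i - rowLen μ (i + 1)), f (t + 1) := by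
  rw [hooksDia, Multiset.map_map]
  have hprod : (((cells μ).filter (fun c => legLen μ c = 0)).val.map
      (f ∘ hookLen μ)).prod
      = ∏ c ∈ (cells μ).filter (fun c => legLen μ c = 0), f (hookLen μ c) := by
    rfl
  rw [hprod]
  have hset : (cells μ).filter (fun c => legLen μ c = 0)
      = (Finset.range n ×ˢ Finset.range n).filter (fun c => colLen μ c.2 = c.1 + 1) := by
    rw [cells, Finset.filter_filter]
    apply Finset.filter_congr
    intro c _
    simp only [legLen]
    omega
  rw [hset, Finset.prod_filter, Finset.prod_product]
  apply Finset.prod_congr rfl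
  intro i _
  rw [← Finset.prod_filter, row_filter_eq]
  apply Finset.prod_nbij' (fun j => rowLen μ i - j - 1) (fun t => rowLen μ i - t - 1)
  · intro j hj
    simp only [Finset.mem_Ico] at hj
    simp only [Finset.mem_range]
    omega
  · intro t ht
    simp only [Finset.mem_range] at ht
    simp only [Finset.mem_Ico]
    have := rowLen_anti μ (Nat.le_succ i)
    omega
  · intro j hj
    simp only [Finset.mem_Ico] at hj
    omega
  · intro t ht
    simp only [Finset.mem_range] at ht
    omega
  · intro j hj
    simp only [Finset.mem_Ico] at hj
    congr 1
    have h3 : i < colLen μ j := (lt_colLen_iff μ).mpr hj.2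
    have h4 : ¬ (i + 1 < colLen μ j) := by
      intro hcon
      have := (lt_colLen_iff μ).mp hcon
      omega
    simp only [hookLen, armLen, legLen]
    omega

noncomputable def bcoef (z : ℂ) (k : ℕ) : ℂ :=
  ∏ t ∈ Finset.range k, (((t : ℂ) + 1 + z) / ((t : ℂ) + 1))

@[simp] lemma bcoef_zero (z : ℂ) : bcoef z 0 = 1 := by simp [bcoef]

lemma bcoef_succ (z : ℂ) (k : ℕ) :
    bcoef z (k + 1) = bcoef z k * (((k : ℂ) + 1 + z) / ((k : ℂ) + 1)) := by
  rw [bcoef, Finset.prod_range_succ, bcoef]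

lemma bcoef_rec (z : ℂ) (k : ℕ) :
    ((k : ℂ) + 1) * bcoef z (k + 1) = ((k : ℂ) + 1 + z) * bcoef z k := by
  rw [bcoef_succ]
  have hk : ((k : ℂ) + 1) ≠ 0 := by
    have := (Nat.cast_ne_zero (R := ℂ)).mpr (Nat.succ_ne_zero k)
    push_cast at this
    exact this
  field_simp

noncomputable def Bser (z : ℂ) (m : ℕ) : PowerSeries ℂ :=
  PowerSeries.mk (fun j => if m ∣ j then bcoef z (j / m) else 0)

noncomputable def Iser (m : ℕ) : PowerSeries ℂ :=
  PowerSeries.mk (fun j => if m ∣ j then 1 else 0)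

lemma coeff_Bser (z : ℂ) (m j : ℕ) :
    PowerSeries.coeff j (Bser z m) = if m ∣ j then bcoef z (j / m) else 0 :=
  PowerSeries.coeff_mk _ _

lemma constantCoeff_Bser (z : ℂ) (m : ℕ) :
    PowerSeries.constantCoeff (Bser z m) = 1 := by
  rw [← PowerSeries.coeff_zero_eq_constantCoeff, coeff_Bser]
  simp

lemma one_sub_X_pow_mul_Iser {m : ℕ} (hm : 1 ≤ m) :
    (1 - (PowerSeries.X : PowerSeries ℂ) ^ m) * Iser m = 1 := by
  ext j
  simp only [sub_mul, one_mul, map_sub, PowerSeries.coeff_X_pow_mul', Iser,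
    PowerSeries.coeff_mk, PowerSeries.coeff_one]
  by_cases hj0 : j = 0
  · subst hj0
    rw [if_pos (dvd_zero m), if_neg (by omega : ¬ m ≤ 0), sub_zero, if_pos rfl]
  · rw [if_neg hj0]
    by_cases hmj : m ≤ j
    · rw [if_pos hmj]
      have hiff : m ∣ j ↔ m ∣ j - m := by
        constructor
        · intro h; exact Nat.dvd_sub h dvd_rfl
        · intro h
          have h2 : j - m + m = j := Nat.sub_add_cancel hmj
          have := Nat.dvd_add h (dvd_refl m)
          rwa [h2] at this
      by_cases hd : m ∣ j
      · rw [if_pos hd, if_pos (hiff.mp hd), sub_self]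
      · rw [if_neg hd, if_neg (fun hc => hd (hiff.mpr hc)), sub_self]
    · rw [if_neg hmj, if_neg (fun hd => hmj (Nat.le_of_dvd (by omega) hd)), sub_zero]

lemma one_sub_X_pow_mul_derivative_Bser (z : ℂ) {m : ℕ} (hm : 1 ≤ m) :
    (1 - (PowerSeries.X : PowerSeries ℂ) ^ m) * (PowerSeries.derivative ℂ (Bser z m))
      = PowerSeries.C ((z + 1) * m) *
          ((PowerSeries.X : PowerSeries ℂ) ^ (m - 1) * Bser z m) := by
  ext j
  rw [sub_mul, one_mul, map_sub, PowerSeries.coeff_derivative,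
    PowerSeries.coeff_X_pow_mul', PowerSeries.coeff_C_mul, PowerSeries.coeff_X_pow_mul',
    coeff_Bser]
  by_cases hd : m ∣ (j + 1)
  · obtain ⟨k, hk⟩ := hd
    have hkpos : k ≠ 0 := by rintro rfl; simp at hk
    obtain ⟨k', rfl⟩ : ∃ k', k = k' + 1 := ⟨k - 1, by omega⟩
    have hk' : j + 1 = m * k' + m := by rw [hk]; ring
    have hmle : m - 1 ≤ j := by omega
    rw [if_pos hmle]
    have hjm : j - (m - 1) = m * k' := by omega
    rw [hjm, coeff_Bser, if_pos (dvd_mul_right m k'),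
      Nat.mul_div_cancel_left _ (by omega : 0 < m)]
    rw [if_pos ⟨k' + 1, hk⟩]
    have hdivk : (j + 1) / m = k' + 1 := by
      rw [hk, Nat.mul_div_cancel_left _ (by omega : 0 < m)]
    rw [hdivk]
    have hcast1 : ((j : ℂ) + 1) = (m : ℂ) * ((k' : ℂ) + 1) := by
      have h0 : ((j + 1 : ℕ) : ℂ) = ((m * (k' + 1) : ℕ) : ℂ) := by rw [hk]
      push_cast at h0
      exact h0
    by_cases hk2 : 1 ≤ k'
    · have hmk : 1 ≤ m * k' := Nat.one_le_iff_ne_zero.mpr (by positivity)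
      have hmj : m ≤ j := by omega
      rw [if_pos hmj]
      rw [PowerSeries.coeff_derivative, coeff_Bser]
      have hjm2 : j - m + 1 = m * k' := by omega
      rw [hjm2, if_pos (Dvd.intro _ rfl), Nat.mul_div_cancel_left _ (by omega : 0 < m)]
      have hcast2 : ((j - m : ℕ) : ℂ) + 1 = (m : ℂ) * (k' : ℂ) := by
        have h0 : ((j - m + 1 : ℕ) : ℂ) = ((m * k' : ℕ) : ℂ) := by rw [hjm2]
        push_cast at h0
        exact h0
      rw [hcast2, hcast1]
      linear_combination (m : ℂ) * bcoef_rec z k'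
    · have hkeq : k' = 0 := by omega
      subst hkeq
      have hmj : ¬ (m ≤ j) := by omega
      rw [if_neg hmj, sub_zero]
      have hb1 : bcoef z 1 = 1 + z := by
        rw [show (1 : ℕ) = 0 + 1 from rfl, bcoef_succ]
        simp
      rw [hb1, bcoef_zero, hcast1]
      ring
  · -- m does not divide j + 1 : everything vanishes
    have hkey : m ≤ j + 1 → ¬ m ∣ (j + 1 - m) := by
      intro hle hc
      apply hd
      have h2 : j + 1 - m + m = j + 1 := Nat.sub_add_cancel hle
      have := Nat.dvd_add hc (dvd_refl m)
      rwa [h2] at this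
    rw [if_neg hd, zero_mul]
    have h2 : (if m ≤ j then
        PowerSeries.coeff (j - m) (PowerSeries.derivative ℂ (Bser z m)) else 0) = 0 := by
      by_cases hmj : m ≤ j
      · rw [if_pos hmj, PowerSeries.coeff_derivative, coeff_Bser]
        have : j - m + 1 = j + 1 - m := by omega
        rw [this, if_neg (hkey (by omega)), zero_mul]
      · rw [if_neg hmj]
    rw [h2, sub_zero]
    have h3 : (if m - 1 ≤ j then
        PowerSeries.coeff (j - (m - 1)) (Bser z m) else 0) = 0 := by
      by_cases hmj : m - 1 ≤ j
      · rw [if_pos hmj, coeff_Bser]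
        have : j - (m - 1) = j + 1 - m := by omega
        rw [this, if_neg (hkey (by omega))]
      · rw [if_neg hmj]
    rw [h3, mul_zero]

lemma derivative_Bser (z : ℂ) {m : ℕ} (hm : 1 ≤ m) :
    PowerSeries.derivative ℂ (Bser z m)
      = PowerSeries.C ((z + 1) * m) *
          ((PowerSeries.X : PowerSeries ℂ) ^ (m - 1) * Iser m * Bser z m) := by
  calc PowerSeries.derivative ℂ (Bser z m)
      = ((1 - (PowerSeries.X : PowerSeries ℂ) ^ m) * Iser m) *
          PowerSeries.derivative ℂ (Bser z m) := by
        rw [one_sub_X_pow_mul_Iser hm, one_mul]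
    _ = Iser m * ((1 - (PowerSeries.X : PowerSeries ℂ) ^ m) *
          PowerSeries.derivative ℂ (Bser z m)) := by ring
    _ = Iser m * (PowerSeries.C ((z + 1) * m) *
          ((PowerSeries.X : PowerSeries ℂ) ^ (m - 1) * Bser z m)) := by
        rw [one_sub_X_pow_mul_derivative_Bser z hm]
    _ = PowerSeries.C ((z + 1) * m) *
          ((PowerSeries.X : PowerSeries ℂ) ^ (m - 1) * Iser m * Bser z m) := by ring

lemma D_finset_prod {ι : Type*} [DecidableEq ι] (s : Finset ι) (f : ι → PowerSeries ℂ) :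
    PowerSeries.derivative ℂ (∏ i ∈ s, f i)
      = ∑ i ∈ s, PowerSeries.derivative ℂ (f i) * ∏ j ∈ s.erase i, f j := by
  induction s using Finset.induction with
  | empty => simp
  | insert a s ha ih =>
    rw [Finset.prod_insert ha, Derivation.leibniz, smul_eq_mul, smul_eq_mul, ih,
      Finset.mul_sum, Finset.sum_insert ha, Finset.erase_insert ha, add_comm,
      mul_comm (∏ j ∈ s, f j)]
    congr 1
    apply Finset.sum_congr rfl
    intro i hi
    rw [Finset.erase_insert_of_ne (by rintro rfl; exact ha hi),
      Finset.prod_insert (fun hc => ha (Finset.mem_of_mem_erase hc))]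
    ring

noncomputable def Sser (N : ℕ) : PowerSeries ℂ :=
  ∑ m ∈ Finset.Icc 1 N, PowerSeries.C (m : ℂ) *
    ((PowerSeries.X : PowerSeries ℂ) ^ (m - 1) * Iser m)

lemma D_Cprod (z : ℂ) (N : ℕ) :
    PowerSeries.derivative ℂ (∏ m ∈ Finset.Icc 1 N, Bser z m)
      = PowerSeries.C (z + 1) * (Sser N * ∏ m ∈ Finset.Icc 1 N, Bser z m) := by
  rw [D_finset_prod]
  have hterm : ∀ m ∈ Finset.Icc 1 N,
      PowerSeries.derivative ℂ (Bser z m) * ∏ j ∈ (Finset.Icc 1 N).erase m, Bser z j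
        = PowerSeries.C (z + 1) *
            ((PowerSeries.C (m : ℂ) * ((PowerSeries.X : PowerSeries ℂ) ^ (m - 1) * Iser m)) *
              ∏ j ∈ Finset.Icc 1 N, Bser z j) := by
    intro m hm
    simp only [Finset.mem_Icc] at hm
    rw [derivative_Bser z hm.1]
    rw [← Finset.mul_prod_erase _ _ (Finset.mem_Icc.mpr hm)]
    rw [map_mul]
    ring
  rw [Finset.sum_congr rfl hterm, ← Finset.mul_sum, Sser, Finset.sum_mul]

lemma coeff_Sser {N j : ℕ} (hj : j + 1 ≤ N) :
    PowerSeries.coeff j (Sser N) = ((∑ d ∈ Nat.divisors (j + 1), d : ℕ) : ℂ) := by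
  rw [Sser, map_sum]
  have hterm : ∀ m ∈ Finset.Icc 1 N,
      PowerSeries.coeff j (PowerSeries.C (m : ℂ) *
        ((PowerSeries.X : PowerSeries ℂ) ^ (m - 1) * Iser m))
      = if m ∣ (j + 1) then (m : ℂ) else 0 := by
    intro m hm
    simp only [Finset.mem_Icc] at hm
    rw [PowerSeries.coeff_C_mul, PowerSeries.coeff_X_pow_mul', Iser]
    by_cases hmle : m - 1 ≤ j
    · rw [if_pos hmle, PowerSeries.coeff_mk]
      have heq : j - (m - 1) = j + 1 - m := by omega
      have hiff : m ∣ (j + 1 - m) ↔ m ∣ (j + 1) := by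
        constructor
        · intro h
          have h2 : j + 1 - m + m = j + 1 := Nat.sub_add_cancel (by omega)
          have := Nat.dvd_add h (dvd_refl m)
          rwa [h2] at this
        · intro h; exact Nat.dvd_sub h dvd_rfl
      rw [heq]
      by_cases hd : m ∣ (j + 1)
      · rw [if_pos (hiff.mpr hd), if_pos hd, mul_one]
      · rw [if_neg (fun hc => hd (hiff.mp hc)), if_neg hd, mul_zero]
    · rw [if_neg hmle, mul_zero]
      have hnd : ¬ m ∣ (j + 1) := by
        intro hd
        have := Nat.le_of_dvd (Nat.succ_pos j) hd
        omega
      rw [if_neg hnd]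
  rw [Finset.sum_congr rfl hterm, ← Finset.sum_filter]
  have hset : (Finset.Icc 1 N).filter (fun m => m ∣ (j + 1)) = Nat.divisors (j + 1) := by
    ext m
    simp only [Finset.mem_filter, Finset.mem_Icc, Nat.mem_divisors]
    constructor
    · intro ⟨⟨h1, h2⟩, h3⟩; exact ⟨h3, Nat.succ_ne_zero j⟩
    · intro ⟨h1, _⟩
      have hle := Nat.le_of_dvd (Nat.succ_pos j) h1
      have hpos := Nat.pos_of_dvd_of_pos h1 (Nat.succ_pos j)
      exact ⟨⟨hpos, by omega⟩, h1⟩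
  rw [hset, Nat.cast_sum]

lemma anti_step {r : ℕ → ℕ} (h : ∀ t, r (t + 1) ≤ r t) {a b : ℕ} (hab : a ≤ b) :
    r b ≤ r a := by
  induction b, hab using Nat.le_induction with
  | base => exact le_rfl
  | succ b hab ih => exact le_trans (h b) ih

lemma sum_Icc_one {M : Type*} [AddCommMonoid M] (n : ℕ) (f : ℕ → M) :
    ∑ m ∈ Finset.Icc 1 n, f m = ∑ i ∈ Finset.range n, f (i + 1) := by
  rw [← Finset.Ico_add_one_right_eq_Icc, Finset.sum_Ico_eq_sum_range]
  apply Finset.sum_congr (by norm_num)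
  intro i _
  rw [Nat.add_comm]

lemma prod_Icc_one {M : Type*} [CommMonoid M] (n : ℕ) (f : ℕ → M) :
    ∏ m ∈ Finset.Icc 1 n, f m = ∏ i ∈ Finset.range n, f (i + 1) := by
  rw [← Finset.Ico_add_one_right_eq_Icc, Finset.prod_Ico_eq_prod_range]
  apply Finset.prod_congr (by norm_num)
  intro i _
  rw [Nat.add_comm]

/-- The map from a partition to its "difference function" finsupp. -/
noncomputable def partFn {n : ℕ} (μ : Nat.Partition n) : ℕ →₀ ℕ :=
  Finsupp.onFinset (Finset.Icc 1 n)
    (fun m => if m ∈ Finset.Icc 1 n then m * (rowLen μ (m - 1) - rowLen μ m) else 0)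
    (by
      intro a ha
      by_cases h : a ∈ Finset.Icc 1 n
      · exact h
      · simp [h] at ha)

lemma partFn_apply {n : ℕ} (μ : Nat.Partition n) (m : ℕ) :
    partFn μ m = if m ∈ Finset.Icc 1 n then m * (rowLen μ (m - 1) - rowLen μ m) else 0 := rfl

lemma partFn_sum {n : ℕ} (μ : Nat.Partition n) :
    ∑ m ∈ Finset.Icc 1 n, partFn μ m = n := by
  have h1 : ∀ m ∈ Finset.Icc 1 n, partFn μ m = m * (rowLen μ (m - 1) - rowLen μ m) := by
    intro m hm
    rw [partFn_apply, if_pos hm]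
  rw [Finset.sum_congr rfl h1, sum_Icc_one]
  have h2 : ∀ i ∈ Finset.range n,
      (i + 1) * (rowLen μ (i + 1 - 1) - rowLen μ (i + 1))
        = (i + 1) * (rowLen μ i - rowLen μ (i + 1)) := by
    intro i _
    norm_num
  rw [Finset.sum_congr rfl h2]
  have h3 := weighted_telescope (rowLen μ) (fun t => rowLen_anti μ (Nat.le_succ t)) n
  rw [rowLen_eq_zero μ le_rfl, Nat.mul_zero, Nat.add_zero] at h3
  rw [h3, sum_rowLen]

lemma partFn_injective {n : ℕ} (μ ν : Nat.Partition n) (h : partFn μ = partFn ν) : μ = ν := by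
  apply partition_eq_of_rowLen_eq
  have hd : ∀ t, t < n → rowLen μ t - rowLen μ (t + 1) = rowLen ν t - rowLen ν (t + 1) := by
    intro t ht
    have := congrFun (congrArg (↑·) h) (t + 1)
    simp only [partFn_apply] at this
    have hmem : t + 1 ∈ Finset.Icc 1 n := Finset.mem_Icc.mpr ⟨by omega, by omega⟩
    rw [if_pos hmem, if_pos hmem] at this
    simp only [Nat.add_sub_cancel] at this
    exact Nat.eq_of_mul_eq_mul_left (by omega) this
  intro i
  rcases le_or_gt n i with hi | hi
  · rw [rowLen_eq_zero μ hi, rowLen_eq_zero ν hi]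
  · have hμ := sum_Ico_sub_telescope (rowLen μ) (fun t => rowLen_anti μ (Nat.le_succ t))
      (le_of_lt hi)
    have hν := sum_Ico_sub_telescope (rowLen ν) (fun t => rowLen_anti ν (Nat.le_succ t))
      (le_of_lt hi)
    rw [rowLen_eq_zero μ le_rfl, Nat.add_zero] at hμ
    rw [rowLen_eq_zero ν le_rfl, Nat.add_zero] at hν
    rw [← hμ, ← hν]
    apply Finset.sum_congr rfl
    intro t ht
    simp only [Finset.mem_Ico] at ht
    exact hd t ht.2

lemma rowLen_of_parts {n : ℕ} (μ : Nat.Partition n) (r : ℕ → ℕ)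
    (hparts : μ.parts = ((Multiset.range n).map r).filter (fun x => 0 < x))
    (hanti : ∀ t, r (t + 1) ≤ r t) (hzero : ∀ i, n ≤ i → r i = 0)
    (hle : ∀ i, r i ≤ n) : ∀ i, rowLen μ i = r i := by
  have hcol : ∀ j, colLen μ j = ((Finset.range n).filter (fun i => j + 1 ≤ r i)).card := by
    intro j
    rw [colLen, hparts, ← Multiset.countP_eq_card_filter, Multiset.countP_filter,
      Multiset.countP_map]
    have hcongr : (Multiset.range n).filter (fun a => j + 1 ≤ r a ∧ 0 < r a)
        = (Multiset.range n).filter (fun a => j + 1 ≤ r a) := by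
      apply Multiset.filter_congr
      intro x _
      constructor
      · intro hx; exact hx.1
      · intro hx; exact ⟨hx, by omega⟩
    rw [hcongr]
    rfl
  have hcol_iff : ∀ i j, i < colLen μ j ↔ (i < n ∧ j < r i) := by
    intro i j
    rw [hcol j]
    have hmono : ∀ ⦃a b : ℕ⦄, a ≤ b → j + 1 ≤ r b → j + 1 ≤ r a :=
      fun a b hab hb => le_trans hb (anti_step hanti hab)
    rw [← mem_filter_range_iff_lt_card (P := fun i => j + 1 ≤ r i) hmono i]
    simp only [Finset.mem_filter, Finset.mem_range]
    omega
  intro i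
  rcases le_or_gt n i with hi | hi
  · rw [rowLen_eq_zero μ hi, hzero i hi]
  · rw [rowLen]
    have hfilt : (Finset.range n).filter (fun j => i < colLen μ j)
        = Finset.range (r i) := by
      ext j
      simp only [Finset.mem_filter, Finset.mem_range, hcol_iff]
      have := hle i
      omega
    rw [hfilt, Finset.card_range]

lemma coeff_prod_Bser (z : ℂ) (n : ℕ) :
    PowerSeries.coeff n (∏ m ∈ Finset.Icc 1 n, Bser z m)
      = ∑ μ : Nat.Partition n,
          ∏ i ∈ Finset.range n, bcoef z (rowLen μ i - rowLen μ (i + 1)) := by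
  classical
  rw [PowerSeries.coeff_prod]
  have hne : ∀ l ∈ Finset.finsuppAntidiag (Finset.Icc 1 n) n,
      (∏ m ∈ Finset.Icc 1 n, PowerSeries.coeff (l m) (Bser z m)) ≠ 0 →
      (∀ m ∈ Finset.Icc 1 n, m ∣ l m) := by
    intro l _ hprod m hm
    by_contra hdvd
    apply hprod
    apply Finset.prod_eq_zero hm
    rw [coeff_Bser, if_neg hdvd]
  rw [← Finset.sum_filter_of_ne hne]
  symm
  apply Finset.sum_bij (i := fun μ _ => partFn μ)
  · -- maps to
    intro μ _
    rw [Finset.mem_filter, Finset.mem_finsuppAntidiag]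
    refine ⟨⟨partFn_sum μ, Finsupp.support_onFinset_subset⟩, ?_⟩
    intro m hm
    rw [partFn_apply, if_pos hm]
    exact dvd_mul_right m _
  · -- injective
    intro μ _ ν _ h
    exact partFn_injective μ ν h
  · -- surjective
    intro l hl
    rw [Finset.mem_filter, Finset.mem_finsuppAntidiag] at hl
    obtain ⟨⟨hsum, hsupp⟩, hdvd⟩ := hl
    set k : ℕ → ℕ := fun m => l m / m with hk
    set r : ℕ → ℕ := fun i => ∑ m ∈ Finset.Ico (i + 1) (n + 1), k m with hrdef
    have hranti : ∀ t, r (t + 1) ≤ r t := by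
      intro t
      apply Finset.sum_le_sum_of_subset
      apply Finset.Ico_subset_Ico (by omega) le_rfl
    have hr0 : ∀ i, n ≤ i → r i = 0 := by
      intro i hi
      rw [hrdef]
      simp only
      rw [Finset.Ico_eq_empty (by omega), Finset.sum_empty]
    have hsum_r : ∑ i ∈ Finset.range n, r i = n := by
      have h1 : ∀ i ∈ Finset.range n, r i
          = ∑ m ∈ (Finset.Icc 1 n).filter (fun m => i + 1 ≤ m), k m := by
        intro i _
        rw [hrdef]
        simp only
        congr 1
        ext m
        simp only [Finset.mem_Ico, Finset.mem_filter, Finset.mem_Icc]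
        omega
      rw [Finset.sum_congr rfl h1]
      simp only [Finset.sum_filter]
      rw [Finset.sum_comm]
      have h2 : ∀ m ∈ Finset.Icc 1 n,
          (∑ i ∈ Finset.range n, if i + 1 ≤ m then k m else 0) = l m := by
        intro m hm
        simp only [Finset.mem_Icc] at hm
        rw [← Finset.sum_filter]
        have hflt : (Finset.range n).filter (fun i => i + 1 ≤ m) = Finset.range m := by
          ext i
          simp only [Finset.mem_filter, Finset.mem_range]
          omega
        rw [hflt, Finset.sum_const, Finset.card_range, smul_eq_mul]
        exact Nat.mul_div_cancel' (hdvd m (Finset.mem_Icc.mpr hm))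
      rw [Finset.sum_congr rfl h2]
      exact hsum
    have hrle : ∀ i, r i ≤ n := by
      intro i
      rcases le_or_gt n i with hi | hi
      · rw [hr0 i hi]; omega
      · rw [← hsum_r]
        exact Finset.single_le_sum (fun j _ => Nat.zero_le (r j))
          (Finset.mem_range.mpr hi)
    -- build the partition
    have hpartsum : (((Multiset.range n).map r).filter (fun x => 0 < x)).sum = n := by
      have hsplit := Multiset.filter_add_not (fun x => 0 < x) ((Multiset.range n).map r)
      have hzero : (((Multiset.range n).map r).filter (fun x => ¬ 0 < x)).sum = 0 := by
        apply Multiset.sum_eq_zero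
        intro x hx
        rw [Multiset.mem_filter] at hx
        omega
      have htot : (((Multiset.range n).map r)).sum = n := by
        have : ∑ i ∈ Finset.range n, r i = ((Multiset.range n).map r).sum := rfl
        rw [← this, hsum_r]
      have := congrArg Multiset.sum hsplit
      rw [Multiset.sum_add, hzero, Nat.add_zero, htot] at this
      exact this
    refine ⟨⟨((Multiset.range n).map r).filter (fun x => 0 < x), ?_, hpartsum⟩,
      Finset.mem_univ _, ?_⟩
    · intro x hx
      rw [Multiset.mem_filter] at hx
      exact hx.2
    · -- partFn of this partition is l
      set μl : Nat.Partition n :=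
        ⟨((Multiset.range n).map r).filter (fun x => 0 < x),
          fun hx => (Multiset.mem_filter.mp hx).2, hpartsum⟩ with hμl
      show partFn μl = l
      have hrow : ∀ i, rowLen μl i = r i :=
        rowLen_of_parts μl r rfl hranti hr0 hrle
      ext m
      rw [partFn_apply]
      by_cases hm : m ∈ Finset.Icc 1 n
      · rw [if_pos hm]
        simp only [Finset.mem_Icc] at hm
        rw [hrow, hrow]
        have hstep : r (m - 1) = k m + r m := by
          have h1 : m - 1 + 1 = m := by omega
          rw [hrdef]
          simp only
          rw [h1]
          exact Finset.sum_eq_sum_Ico_succ_bot (by omega) k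
        have : r (m - 1) - r m = k m := by omega
        rw [this, hk]
        exact Nat.mul_div_cancel' (hdvd m (Finset.mem_Icc.mpr hm))
      · rw [if_neg hm]
        by_contra hne0
        have : m ∈ l.support := Finsupp.mem_support_iff.mpr (fun hc => hne0 hc.symm)
        exact hm (hsupp this)
  · -- value match
    intro μ _
    have h1 : ∀ m ∈ Finset.Icc 1 n,
        PowerSeries.coeff (partFn μ m) (Bser z m)
          = bcoef z (rowLen μ (m - 1) - rowLen μ m) := by
      intro m hm
      have hm' := Finset.mem_Icc.mp hm
      rw [partFn_apply, if_pos hm, coeff_Bser, if_pos (dvd_mul_right m _),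
        Nat.mul_div_cancel_left _ (by omega : 0 < m)]
    symm
    rw [Finset.prod_congr rfl h1, prod_Icc_one]
    apply Finset.prod_congr rfl
    intro i _
    norm_num

lemma coeff_zero_prod_Bser (z : ℂ) (N : ℕ) :
    PowerSeries.coeff 0 (∏ m ∈ Finset.Icc 1 N, Bser z m) = 1 := by
  rw [PowerSeries.coeff_zero_eq_constantCoeff, map_prod]
  simp [constantCoeff_Bser]

lemma coeff_rec (z : ℂ) {N j : ℕ} (h1 : 1 ≤ j) (h2 : j ≤ N) :
    (j : ℂ) * PowerSeries.coeff j (∏ m ∈ Finset.Icc 1 N, Bser z m)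
      = (z + 1) * ∑ k ∈ Finset.range j,
          ((∑ d ∈ Nat.divisors (k + 1), d : ℕ) : ℂ) *
            PowerSeries.coeff (j - 1 - k) (∏ m ∈ Finset.Icc 1 N, Bser z m) := by
  have hD := congrArg (PowerSeries.coeff (j - 1)) (D_Cprod z N)
  rw [PowerSeries.coeff_derivative, PowerSeries.coeff_C_mul, PowerSeries.coeff_mul,
    Finset.Nat.sum_antidiagonal_eq_sum_range_succ_mk] at hD
  have hj : j - 1 + 1 = j := by omega
  rw [hj] at hD
  have hcast : ((j - 1 : ℕ) : ℂ) + 1 = (j : ℂ) := by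
    have : ((j - 1 : ℕ) : ℂ) = (j : ℂ) - 1 := by
      rw [Nat.cast_sub h1]; norm_num
    rw [this]; ring
  rw [hcast] at hD
  rw [mul_comm, hD]
  congr 1
  apply Finset.sum_congr (by rw [Nat.succ_eq_add_one, hj])
  intro k hk
  simp only [Finset.mem_range] at hk
  dsimp only
  rw [coeff_Sser (by omega)]

lemma coeff_eq_darcais (z : ℂ) (N : ℕ) :
    ∀ j, j ≤ N → PowerSeries.coeff j (∏ m ∈ Finset.Icc 1 N, Bser z m)
      = Polynomial.aeval (z + 1) (darcais j) := by
  intro j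
  induction j using Nat.strong_induction_on with
  | _ j ih =>
    intro hjN
    match j with
    | 0 =>
      rw [coeff_zero_prod_Bser]
      have h0 : darcais 0 = 1 := by rw [darcais]
      rw [h0, map_one]
    | j + 1 =>
      have hrec := coeff_rec z (N := N) (j := j + 1) (by omega) hjN
      have hdar : darcais (j + 1) = Polynomial.C (((j : ℚ) + 1)⁻¹) * Polynomial.X *
          ∑ k ∈ Finset.range (j + 1),
            ((∑ d ∈ Nat.divisors (k + 1), d : ℕ) : ℚ) • darcais (j - k) := by
        rw [darcais]
      rw [hdar, map_mul, map_mul, Polynomial.aeval_C, Polynomial.aeval_X, map_sum]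
      have hterm : ∀ k ∈ Finset.range (j + 1),
          Polynomial.aeval (z + 1)
            (((∑ d ∈ Nat.divisors (k + 1), d : ℕ) : ℚ) • darcais (j - k))
          = ((∑ d ∈ Nat.divisors (k + 1), d : ℕ) : ℂ) *
              PowerSeries.coeff (j - k) (∏ m ∈ Finset.Icc 1 N, Bser z m) := by
        intro k hk
        simp only [Finset.mem_range] at hk
        rw [map_smul]
        rw [ih (j - k) (by omega) (by omega)]
        rw [Algebra.smul_def]
        congr 1
      rw [Finset.sum_congr rfl hterm]
      have halg : (algebraMap ℚ ℂ) (((j : ℚ) + 1)⁻¹) = ((j : ℂ) + 1)⁻¹ := by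
        rw [show (algebraMap ℚ ℂ) (((j : ℚ) + 1)⁻¹) = ((((j : ℚ) + 1)⁻¹ : ℚ) : ℂ) from rfl]
        push_cast
        norm_num
      rw [halg]
      have hsimp : ∀ k ∈ Finset.range (j + 1), (j + 1 - 1 - k) = j - k := by
        intro k _; omega
      have hj0 : ((j : ℂ) + 1) ≠ 0 := by
        have := (Nat.cast_ne_zero (R := ℂ)).mpr (Nat.succ_ne_zero j)
        push_cast at this
        exact this
      have hcast2 : ((j + 1 : ℕ) : ℂ) = (j : ℂ) + 1 := by push_cast; ring
      rw [hcast2] at hrec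
      have hsum_eq : ∑ k ∈ Finset.range (j + 1),
          ((∑ d ∈ Nat.divisors (k + 1), d : ℕ) : ℂ) *
            PowerSeries.coeff (j + 1 - 1 - k) (∏ m ∈ Finset.Icc 1 N, Bser z m)
          = ∑ k ∈ Finset.range (j + 1),
          ((∑ d ∈ Nat.divisors (k + 1), d : ℕ) : ℂ) *
            PowerSeries.coeff (j - k) (∏ m ∈ Finset.Icc 1 N, Bser z m) := by
        apply Finset.sum_congr rfl
        intro k hk
        rw [hsimp k hk]
      rw [hsum_eq] at hrec
      have hgoal : PowerSeries.coeff (j + 1) (∏ m ∈ Finset.Icc 1 N, Bser z m)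
          = ((j : ℂ) + 1)⁻¹ * ((z + 1) * ∑ k ∈ Finset.range (j + 1),
              ((∑ d ∈ Nat.divisors (k + 1), d : ℕ) : ℂ) *
                PowerSeries.coeff (j - k) (∏ m ∈ Finset.Icc 1 N, Bser z m)) := by
        rw [← hrec, inv_mul_cancel_left₀ hj0]
      rw [hgoal]
      ring

/-- (Amdeberhan's Conjecture 1, proved in the paper.)  For every positive
integer `n` and every complex `z`,
`∑_{λ⊢n} ∏_{h ∈ H(λ)^⋄} (h+z)/h = P_n(z+1)`,
where `H(λ)^⋄` is the multiset of hook lengths of cells with trivial leg and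
`P_n` is the `n`-th D'Arcais polynomial. -/
theorem hook_trivial_leg_eq_darcais (n : ℕ) (hn : 1 ≤ n) (z : ℂ) :
    ∑ μ : Nat.Partition n, ((hooksDia μ).map (fun h => ((h : ℂ) + z) / (h : ℂ))).prod
      = Polynomial.aeval (z + 1) (darcais n) := by
  have hcoe : ∀ (s : Multiset ℕ),
      (do let a ← s; pure ((a : ℂ))) = Multiset.map (fun a : ℕ => (a : ℂ)) s := by
    intro s; simp [Multiset.bind_singleton]
  have h1 : ∀ μ : Nat.Partition n,
      (Multiset.map (fun h : ℂ => (h + z) / h)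
        (Multiset.map (fun a : ℕ => (a : ℂ)) (hooksDia μ))).prod
        = ∏ i ∈ Finset.range n, bcoef z (rowLen μ i - rowLen μ (i + 1)) := by
    intro μ
    rw [Multiset.map_map, hooksDia_prod]
    apply Finset.prod_congr rfl
    intro i _
    rw [bcoef]
    apply Finset.prod_congr rfl
    intro t _
    simp only [Function.comp_apply]
    push_cast
    ring
  simp only [hcoe]
  rw [Finset.sum_congr rfl (fun μ _ => h1 μ), ← coeff_prod_Bser z n,
    coeff_eq_darcais z n n le_rfl]
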